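/- arXiv:1907.10350 — 5 statements merged into one kernel-verified Lean document; each statement's English description precedes it below -/
import Mathlib

section
/- Let R be a finite ring, let r ∈ R with r ≠ 0, and let x ∈ R. In the r-noncommuting graph Γ_R^r: if 2r = 0, then the degree of x equals |R| - 1 when T_{x,r} = ∅ and equals |R| - |C_R(x)| - 1 otherwise; if 2r ≠ 0, then the degree of x equals |R| - 1 when T_{x,r} = ∅ and equals |R| - 2|C_R(x)| - 1 otherwise. -/
/-- The `r`-noncommuting graph of a finite ring `R`: vertices are elements of `R`,
and distinct `x`, `y` are adjacent iff `x*y - y*x ≠ r` and `x*y - y*x ≠ -r`. -/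
def ncGraph {R : Type*} [NonUnitalRing R] (r : R) : SimpleGraph R where
  Adj x y := x ≠ y ∧ x * y - y * x ≠ r ∧ x * y - y * x ≠ -r
  symm := by
    constructor
    rintro x y ⟨h1, h2, h3⟩
    refine ⟨h1.symm, fun h => h3 ?_, fun h => h2 ?_⟩
    · rw [← neg_sub (y * x) (x * y), h]
    · rw [← neg_sub (y * x) (x * y), h, neg_neg]
  loopless := ⟨fun x h => h.1 rfl⟩

/-- degrees in Γ_R^r in terms of centralizers, for r ≠ 0. -/
theorem stmt2 {R : Type*} [NonUnitalRing R] [Fintype R] (r : R) (hr : r ≠ 0) (x : R) :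
    (r + r = 0 →
      (({y : R | x * y - y * x = r}) = ∅ →
        ((ncGraph r).neighborSet x).ncard = Nat.card R - 1) ∧
      (({y : R | x * y - y * x = r}) ≠ ∅ →
        ((ncGraph r).neighborSet x).ncard
          = Nat.card R - ({y : R | x * y = y * x}).ncard - 1)) ∧
    (r + r ≠ 0 →
      (({y : R | x * y - y * x = r}) = ∅ →
        ((ncGraph r).neighborSet x).ncard = Nat.card R - 1) ∧
      (({y : R | x * y - y * x = r}) ≠ ∅ →
        ((ncGraph r).neighborSet x).ncard
          = Nat.card R - 2 * ({y : R | x * y = y * x}).ncard - 1)) := by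
  classical
  set C : Set R := {y : R | x * y = y * x} with hCdef
  set T : R → Set R := fun s => {y : R | x * y - y * x = s} with hTdef
  -- cardinality of nonempty commutator level sets equals |C|
  have key : ∀ s : R, (T s).Nonempty → (T s).ncard = C.ncard := by
    rintro s ⟨y₀, hy₀⟩
    have himg : (fun c => c + y₀) '' C = T s := by
      ext y
      constructor
      · rintro ⟨c, hc, rfl⟩
        have h1 : x * (c + y₀) - (c + y₀) * x
            = (x * c - c * x) + (x * y₀ - y₀ * x) := by noncomm_ring
        simp only [hCdef, Set.mem_setOf_eq] at hc
        simp only [hTdef, Set.mem_setOf_eq] at hy₀ ⊢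
        rw [h1, hc, hy₀, sub_self, zero_add]
      · intro hy
        refine ⟨y - y₀, ?_, by simp⟩
        simp only [hTdef, Set.mem_setOf_eq] at hy hy₀
        have h1 : x * (y - y₀) - (y - y₀) * x
            = (x * y - y * x) - (x * y₀ - y₀ * x) := by noncomm_ring
        have h2 : x * (y - y₀) - (y - y₀) * x = 0 := by rw [h1, hy, hy₀, sub_self]
        simpa only [hCdef, Set.mem_setOf_eq] using sub_eq_zero.mp h2
    rw [← himg, Set.ncard_image_of_injective _ (add_left_injective y₀)]
  -- T (-r) = - T r
  have hneg : T (-r) = Neg.neg '' T r := by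
    ext y
    simp only [hTdef, Set.mem_image, Set.mem_setOf_eq]
    constructor
    · intro hy
      refine ⟨-y, ?_, neg_neg y⟩
      have h1 : x * (-y) - (-y) * x = -(x * y - y * x) := by noncomm_ring
      rw [h1, hy, neg_neg]
    · rintro ⟨z, hz, rfl⟩
      have h1 : x * (-z) - (-z) * x = -(x * z - z * x) := by noncomm_ring
      rw [h1, hz]
  -- description of the neighbor set
  have hN : (ncGraph r).neighborSet x = ({x} ∪ T r ∪ T (-r))ᶜ := by
    ext y
    have hAdj : (ncGraph r).Adj x y ↔
        (x ≠ y ∧ x * y - y * x ≠ r ∧ x * y - y * x ≠ -r) := Iff.rfl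
    simp only [SimpleGraph.mem_neighborSet, hAdj, Set.mem_compl_iff, Set.mem_union,
      Set.mem_singleton_iff, hTdef, Set.mem_setOf_eq, not_or]
    constructor
    · rintro ⟨h1, h2, h3⟩
      exact ⟨⟨fun h => h1 h.symm, h2⟩, h3⟩
    · rintro ⟨⟨h1, h2⟩, h3⟩
      exact ⟨fun h => h1 h.symm, h2, h3⟩
  have hcompl : ∀ S : Set R, (Sᶜ).ncard = Nat.card R - S.ncard := by
    intro S
    have := S.ncard_add_ncard_compl (Set.toFinite S) (Set.toFinite _)
    omega
  have hxT : x ∉ T r := by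
    simp only [hTdef, Set.mem_setOf_eq, sub_self]
    exact fun h => hr h.symm
  have hxTn : x ∉ T (-r) := by
    simp only [hTdef, Set.mem_setOf_eq, sub_self]
    intro h
    exact hr (neg_eq_zero.mp h.symm)
  have hTnum : T (-r) ≠ ∅ ↔ T r ≠ ∅ := by
    rw [hneg]
    simp [Set.image_eq_empty]
  constructor
  · intro h2r
    have hrr : -r = r := by
      rw [neg_eq_iff_add_eq_zero]; exact h2r
    constructor
    · intro hTe
      have hTe0 : T r = ∅ := hTe
      rw [hN, hrr, hTe0]
      simp only [Set.union_empty]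
      rw [hcompl, Set.ncard_singleton]
    · intro hTne
      have hne : (T r).Nonempty := Set.nonempty_iff_ne_empty.mpr hTne
      have hu : {x} ∪ T r ∪ T r = insert x (T r) := by
        rw [Set.union_assoc, Set.union_self, Set.singleton_union]
      rw [hN, hrr, hu, hcompl, Set.ncard_insert_of_notMem hxT (Set.toFinite _), key r hne]
      omega
  · intro h2r
    constructor
    · intro hTe
      have hTe0 : T r = ∅ := hTe
      have hTe' : T (-r) = ∅ := by
        by_contra h
        exact (hTnum.mp h) hTe0
      rw [hN, hTe0, hTe']
      simp only [Set.union_empty]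
      rw [hcompl, Set.ncard_singleton]
    · intro hTne
      have hne : (T r).Nonempty := Set.nonempty_iff_ne_empty.mpr hTne
      have hnen : (T (-r)).Nonempty := by
        rw [hneg]
        exact hne.image _
      have hdisj : Disjoint (T r) (T (-r)) := by
        rw [Set.disjoint_left]
        intro y hy hy'
        simp only [hTdef, Set.mem_setOf_eq] at hy hy'
        apply h2r
        have h5 : r = -r := hy.symm.trans hy'
        exact add_eq_zero_iff_eq_neg.mpr h5
      have hdisj2 : Disjoint ({x} : Set R) (T r ∪ T (-r)) := by
        simp only [Set.disjoint_singleton_left, Set.mem_union]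
        tauto
      have hcu : ({x} ∪ T r ∪ T (-r)).ncard = 1 + C.ncard + C.ncard := by
        rw [Set.union_assoc, Set.ncard_union_eq hdisj2 (Set.toFinite _) (Set.toFinite _),
          Set.ncard_union_eq hdisj (Set.toFinite _) (Set.toFinite _),
          Set.ncard_singleton, key r hne, key (-r) hnen]
        ring
      rw [hN, hcompl, hcu]
      omega
end

section
/- Let R be a finite noncommutative ring with |R| > 4 and let r ∈ R. Then no vertex of the r-noncommuting graph Γ_R^r has degree 1. -/
/-- if R is noncommutative with more than 4 elements, no vertex of Γ_R^r
has degree 1. -/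
theorem stmt5 {R : Type*} [NonUnitalRing R] [Fintype R]
    (hnc : ∃ a b : R, a * b ≠ b * a) (hcard : 4 < Nat.card R) (r : R) (x : R) :
    ((ncGraph r).neighborSet x).ncard ≠ 1 := by
  intro h1
  obtain ⟨y, hy⟩ := Set.ncard_eq_one.mp h1
  have hmem : ∀ z : R, x ≠ z → x*z - z*x ≠ r → x*z - z*x ≠ -r → z = y := by
    intro z h1 h2 h3
    have : z ∈ (ncGraph r).neighborSet x := ⟨h1, h2, h3⟩
    rw [hy] at this; exact this
  have hy' : x ≠ y ∧ x*y - y*x ≠ r ∧ x*y - y*x ≠ -r := by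
    have : y ∈ (ncGraph r).neighborSet x := by rw [hy]; rfl
    exact this
  -- helper: there is an element distinct from any two given ones
  have hex : ∀ a b : R, ∃ z : R, z ≠ a ∧ z ≠ b := by
    intro a b
    by_contra h
    push_neg at h
    have hsub : (Set.univ : Set R) ⊆ {a, b} := by
      intro z _
      rcases eq_or_ne z a with h' | h'
      · exact Or.inl h'
      · exact Or.inr (h z h')
    have h2 : (Set.univ : Set R).ncard ≤ ({a,b} : Set R).ncard :=
      Set.ncard_le_ncard hsub (Set.toFinite _)
    have h3 : ({a,b} : Set R).ncard ≤ 2 := by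
      calc ({a,b} : Set R).ncard ≤ ({b} : Set R).ncard + 1 := Set.ncard_insert_le _ _
        _ = 2 := by rw [Set.ncard_singleton]
    rw [Set.ncard_univ] at h2
    omega
  rcases eq_or_ne x 0 with hx0 | hx0
  · -- case x = 0 : every nonzero element is a neighbor
    subst hx0
    obtain ⟨z, hz0, hzy⟩ := hex 0 y
    have hr : (0:R) ≠ r := by simpa using hy'.2.1
    have hr' : (0:R) ≠ -r := by simpa using hy'.2.2
    have : z = y := hmem z (Ne.symm hz0) (by simpa using hr) (by simpa using hr')
    exact hzy this
  · -- case x ≠ 0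
    have hy0 : y = 0 := by
      by_contra hyne
      have hne : x ≠ y + x := by
        intro h
        apply hyne
        have h2 : y + x = 0 + x := by rw [zero_add, ← h]
        exact add_right_cancel h2
      have hcomm : x*(y+x) - (y+x)*x = x*y - y*x := by noncomm_ring
      have := hmem (y+x) hne (by rw [hcomm]; exact hy'.2.1) (by rw [hcomm]; exact hy'.2.2)
      exact hx0 (by simpa using this)
    subst hy0
    have hr : r ≠ 0 := by
      intro h
      apply hy'.2.1
      simp [h]
    have hker : ∀ c : R, x*c - c*x = 0 → c = 0 ∨ c = x := by
      intro c hc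
      rcases eq_or_ne c x with h' | h'
      · exact Or.inr h'
      · left
        exact hmem c (Ne.symm h') (by rw [hc]; exact fun h => hr h.symm)
          (by rw [hc]; intro h; exact hr (by simpa using h.symm))
    have h2x : x + x = 0 := by
      have : x*(x+x) - (x+x)*x = 0 := by noncomm_ring
      rcases hker _ this with h' | h'
      · exact h'
      · exact absurd (add_eq_right.mp h') hx0
    have key2 : ∀ w : R, (x*w - w*x) + (x*w - w*x) = 0 := by
      intro w
      have e : (x*w - w*x) + (x*w - w*x) = (x+x)*w - w*(x+x) := by noncomm_ring
      rw [e, h2x]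
      simp
    have hvals : ∀ z : R, x*z - z*x = 0 ∨ x*z - z*x = r ∨ x*z - z*x = -r := by
      intro z
      by_cases h1 : x*z - z*x = r
      · exact Or.inr (Or.inl h1)
      by_cases h2 : x*z - z*x = -r
      · exact Or.inr (Or.inr h2)
      rcases eq_or_ne x z with e | e
      · left; rw [← e, sub_self]
      · have := hmem z e h1 h2
        subst this
        left; simp
    obtain ⟨z, hz0, hzx⟩ := hex 0 x
    have hzr : x*z - z*x = r ∨ x*z - z*x = -r := by
      rcases hvals z with h | h
      · rcases hker z h with h' | h'
        · exact absurd h' hz0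
        · exact absurd h' hzx
      · exact h
    have h2r : r + r = 0 := by
      rcases hzr with h | h
      · have := key2 z; rwa [h] at this
      · have := key2 z; rw [h] at this
        have : -(r + r) = 0 := by rw [neg_add]; exact this
        exact neg_eq_zero.mp this
    have hrr : -r = r := by
      have := eq_neg_of_add_eq_zero_left h2r
      exact this.symm
    have hzr' : x*z - z*x = r := by
      rcases hzr with h | h
      · exact h
      · rw [h, hrr]
    have hsub : (Set.univ : Set R) ⊆ {0, x, z, z + x} := by
      intro w _
      rcases hvals w with h | h | h
      · rcases hker w h with h' | h'
        · exact Or.inl h'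
        · exact Or.inr (Or.inl h')
      · have hc : x*(w - z) - (w - z)*x = 0 := by
          have e : x*(w-z) - (w-z)*x = (x*w - w*x) - (x*z - z*x) := by noncomm_ring
          rw [e, h, hzr', sub_self]
        rcases hker _ hc with h' | h'
        · exact Or.inr (Or.inr (Or.inl (sub_eq_zero.mp h')))
        · refine Or.inr (Or.inr (Or.inr ?_))
          have : w = x + z := (sub_eq_iff_eq_add.mp h')
          rw [this, add_comm]
          rfl
      · rw [hrr] at h
        have hc : x*(w - z) - (w - z)*x = 0 := by
          have e : x*(w-z) - (w-z)*x = (x*w - w*x) - (x*z - z*x) := by noncomm_ring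
          rw [e, h, hzr', sub_self]
        rcases hker _ hc with h' | h'
        · exact Or.inr (Or.inr (Or.inl (sub_eq_zero.mp h')))
        · refine Or.inr (Or.inr (Or.inr ?_))
          have : w = x + z := (sub_eq_iff_eq_add.mp h')
          rw [this, add_comm]
          rfl
    have hle : (Set.univ : Set R).ncard ≤ ({0, x, z, z + x} : Set R).ncard :=
      Set.ncard_le_ncard hsub (Set.toFinite _)
    have hb : ({0, x, z, z + x} : Set R).ncard ≤ 4 := by
      calc ({0, x, z, z + x} : Set R).ncard
          ≤ ({x, z, z + x} : Set R).ncard + 1 := Set.ncard_insert_le _ _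
        _ ≤ (({z, z + x} : Set R).ncard + 1) + 1 := by
            exact Nat.add_le_add_right (Set.ncard_insert_le _ _) 1
        _ ≤ ((({z + x} : Set R).ncard + 1) + 1) + 1 := by
            exact Nat.add_le_add_right (Nat.add_le_add_right (Set.ncard_insert_le _ _) 1) 1
        _ = 4 := by rw [Set.ncard_singleton]
    rw [Set.ncard_univ] at hle
    omega
end

section
/- Let R be a finite noncommutative ring and let r ∈ K(R). Then the r-noncommuting graph Γ_R^r is not regular; that is, there is no natural number d such that every vertex of Γ_R^r has degree d. -/
/-- for a noncommutative ring R and r ∈ K(R), Γ_R^r is not regular. -/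
theorem stmt7 {R : Type*} [NonUnitalRing R] [Fintype R]
    (hnc : ∃ a b : R, a * b ≠ b * a) (r : R) (hr : ∃ a b : R, a * b - b * a = r) :
    ¬ ∃ d : ℕ, ∀ x : R, ((ncGraph r).neighborSet x).ncard = d := by
  rintro ⟨d, hd⟩
  obtain ⟨a, b, hab⟩ := hr
  by_cases h0 : r = 0
  · subst h0
    obtain ⟨x, y, hxy⟩ := hnc
    have h1 : ((ncGraph (0:R)).neighborSet (0:R)) = ∅ := by
      ext z
      simp [ncGraph, SimpleGraph.neighborSet]
    have h2 : y ∈ (ncGraph (0:R)).neighborSet x := by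
      refine ⟨fun h => hxy (by rw [h]), ?_, ?_⟩
      · simpa [sub_eq_zero] using hxy
      · simpa [sub_eq_zero] using hxy
    have h3 := hd (0:R)
    rw [h1, Set.ncard_empty] at h3
    have h4 := hd x
    rw [← h3, Set.ncard_eq_zero (Set.toFinite _)] at h4
    rw [h4] at h2
    exact h2
  · have hab' : a ≠ b := by
      rintro rfl
      exact h0 (by rw [← hab, sub_self])
    have hs : (ncGraph r).neighborSet a ⊂ ({a}ᶜ : Set R) := by
      constructor
      · intro y hy
        simp only [Set.mem_compl_iff, Set.mem_singleton_iff]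
        exact fun h => hy.1 h.symm
      · intro hsub
        have hb : b ∈ ({a}ᶜ : Set R) := by
          simp only [Set.mem_compl_iff, Set.mem_singleton_iff]
          exact fun h => hab' h.symm
        have := hsub hb
        exact this.2.1 hab
    have h1 := Set.ncard_lt_ncard hs (Set.toFinite _)
    have h2 : (ncGraph r).neighborSet (0:R) = ({(0:R)}ᶜ : Set R) := by
      ext y
      simp only [SimpleGraph.mem_neighborSet, Set.mem_compl_iff, Set.mem_singleton_iff]
      constructor
      · rintro ⟨h, -, -⟩
        exact fun hh => h hh.symm
      · intro h
        refine ⟨fun hh => h hh.symm, ?_, ?_⟩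
        · simpa using fun hh => h0 hh.symm
        · simp only [zero_mul, mul_zero, sub_zero]
          intro hh
          exact h0 (by rw [← neg_neg r, ← hh, neg_zero])
    have h3 : ({(0:R)}ᶜ : Set R).ncard = ({a}ᶜ : Set R).ncard := by
      have e1 := Set.ncard_add_ncard_compl ({(0:R)} : Set R)
      have e2 := Set.ncard_add_ncard_compl ({a} : Set R)
      rw [Set.ncard_singleton] at e1 e2
      omega
    rw [hd a] at h1
    have := hd (0:R)
    rw [h2, h3] at this
    omega
end

section
/- Let R be a finite noncommutative ring and let r ∈ R ∖ Z(R) with 2r ≠ 0 and 3r ≠ 0. Then the diameter of Δ_R^r is at most 3; that is, any two distinct vertices of Δ_R^r are joined by a path of length at most 3. -/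
/-- The center of R as a set. -/
def centerSet (R : Type*) [NonUnitalRing R] : Set R := {z | ∀ x, z * x = x * z}

/-- The induced subgraph of the r-noncommuting graph on the non-central elements. -/
def deltaGraph {R : Type*} [NonUnitalRing R] (r : R) :
    SimpleGraph {x : R // x ∉ centerSet R} :=
  (ncGraph r).comap Subtype.val

/-- if R is noncommutative, r ∉ Z(R), 2r ≠ 0 and 3r ≠ 0, then any two
distinct vertices of Δ_R^r are joined by a path of length at most 3. -/
theorem stmt13 {R : Type*} [NonUnitalRing R] [Fintype R]
    (hnc : ∃ a b : R, a * b ≠ b * a) (r : R) (hr : r ∉ centerSet R)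
    (h2 : r + r ≠ 0) (h3 : r + r + r ≠ 0) :
    ∀ x y : {a : R // a ∉ centerSet R}, x ≠ y →
      ∃ w : (deltaGraph r).Walk x y, w.length ≤ 3 := by
  intro x y hxy
  have hr0 : r ≠ 0 := fun h => hr (h ▸ fun t => by rw [zero_mul, mul_zero])
  have hrr : r + r ≠ r := fun h => hr0 (by
    have h' : r + r = r + 0 := by rw [add_zero]; exact h
    exact add_left_cancel h')
  have hrrn : r + r ≠ -r := fun h => h3 (by rw [h, neg_add_cancel])
  by_cases hadj : (deltaGraph r).Adj x y
  · exact ⟨SimpleGraph.Walk.cons hadj SimpleGraph.Walk.nil, by simp⟩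
  have hvne : x.val ≠ y.val := fun h => hxy (Subtype.ext h)
  have hc : x.val * y.val - y.val * x.val = r ∨ x.val * y.val - y.val * x.val = -r := by
    by_contra hcon
    push_neg at hcon
    exact hadj ⟨hvne, hcon.1, hcon.2⟩
  set a := x.val with ha
  set b := y.val with hb
  have hcomm : a * (b + b) - (b + b) * a = (a * b - b * a) + (a * b - b * a) := by
    noncomm_ring
  have hzz : (b + b) * b - b * (b + b) = 0 := by noncomm_ring
  have hzc : (b + b) ∉ centerSet R := by
    intro hz
    have h0 : a * (b + b) - (b + b) * a = 0 := by rw [hz a]; exact sub_self _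
    rw [hcomm] at h0
    rcases hc with h | h
    · rw [h] at h0; exact h2 h0
    · rw [h] at h0
      apply h2
      have := congrArg Neg.neg h0
      simpa using this
  set z : {t : R // t ∉ centerSet R} := ⟨b + b, hzc⟩ with hzdef
  have hzy : z ≠ y := by
    intro h
    have hbb : b + b = b := congrArg Subtype.val h
    have hb0 : b = 0 := by
      have h' : b + b = b + 0 := by rw [add_zero]; exact hbb
      exact add_left_cancel h'
    apply y.2
    intro t
    rw [← hb, hb0, zero_mul, mul_zero]
  have hxz : x ≠ z := by
    intro h
    have hab : a = b + b := congrArg Subtype.val h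
    have h0 : a * b - b * a = 0 := by rw [hab]; noncomm_ring
    rcases hc with hh | hh
    · rw [hh] at h0; exact hr0 h0
    · rw [hh] at h0; exact hr0 (neg_eq_zero.mp h0)
  have adj1 : (deltaGraph r).Adj x z := by
    refine ⟨fun h => hxz (Subtype.ext h), ?_, ?_⟩
    · show a * (b + b) - (b + b) * a ≠ r
      rw [hcomm]
      rcases hc with h | h
      · rw [h]; exact hrr
      · rw [h]; intro hq
        exact hrrn (neg_eq_iff_eq_neg.mp (by rw [neg_add, hq]) : r + r = -r)
    · show a * (b + b) - (b + b) * a ≠ -r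
      rw [hcomm]
      rcases hc with h | h
      · rw [h]; exact hrrn
      · rw [h]; intro hq
        apply hrr
        have : -(r + r) = -r := by rw [neg_add]; exact hq
        exact neg_inj.mp this
  have adj2 : (deltaGraph r).Adj z y := by
    refine ⟨fun h => hzy (Subtype.ext h), ?_, ?_⟩
    · show (b + b) * b - b * (b + b) ≠ r
      rw [hzz]; exact fun h => hr0 h.symm
    · show (b + b) * b - b * (b + b) ≠ -r
      rw [hzz]; exact fun h => hr0 (neg_eq_zero.mp h.symm)
  exact ⟨SimpleGraph.Walk.cons adj1 (SimpleGraph.Walk.cons adj2 SimpleGraph.Walk.nil), by simp⟩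
end

section
/- Let R be a finite noncommutative ring with |Z(R)| = 1 and let r ∈ R ∖ Z(R) with 2r ≠ 0, 3r = 0, and |C_R(r)| ≠ 3. Then the diameter of Δ_R^r is at most 3; that is, any two distinct vertices of Δ_R^r are joined by a path of length at most 3. -/
/-- if R is noncommutative, |Z(R)| = 1, r ∉ Z(R), 2r ≠ 0, 3r = 0 and
|C_R(r)| ≠ 3, then any two distinct vertices of Δ_R^r are joined by a path of
length at most 3. -/
theorem stmt14 {R : Type*} [NonUnitalRing R] [Fintype R]
    (hnc : ∃ a b : R, a * b ≠ b * a) (hZ : (centerSet R).ncard = 1)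
    (r : R) (hr : r ∉ centerSet R) (h2 : r + r ≠ 0) (h3 : r + r + r = 0)
    (hC : ({y : R | r * y = y * r}).ncard ≠ 3) :
    ∀ x y : {a : R // a ∉ centerSet R}, x ≠ y →
      ∃ w : (deltaGraph r).Walk x y, w.length ≤ 3 := by
  classical
  have h0c : (0:R) ∈ centerSet R := fun t => by rw [zero_mul, mul_zero]
  have hcen : ∀ z : R, z ∈ centerSet R → z = 0 := by
    obtain ⟨a, ha⟩ := Set.ncard_eq_one.mp hZ
    intro z hz
    rw [ha, Set.mem_singleton_iff] at hz
    have h0a : (0:R) = a := by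
      have := h0c; rw [ha, Set.mem_singleton_iff] at this; exact this
    rw [hz, ← h0a]
  have hnz : ∀ z : R, z ≠ 0 → z ∉ centerSet R := fun z h hm => h (hcen z hm)
  have hr0 : r ≠ 0 := fun h => hr (h ▸ h0c)
  have h0r : (0:R) ≠ r := fun h => hr0 h.symm
  have h0nr : (0:R) ≠ -r := fun h => hr0 (neg_eq_zero.mp h.symm)
  have hneg : -r = r + r := by
    have h' : r + (r + r) = 0 := by rw [add_comm]; exact h3
    exact neg_eq_of_add_eq_zero_right h'
  have hnegrr : -(r + r) = r := by rw [← hneg, neg_neg]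
  -- existence of s ∈ C_R(r) \ {0, r, 2r}
  have hex : ∃ s : R, r * s = s * r ∧ s ≠ 0 ∧ s ≠ r ∧ s ≠ r + r := by
    by_contra h
    push_neg at h
    apply hC
    have heq : ({y : R | r * y = y * r}) = {0, r, r + r} := by
      apply Set.Subset.antisymm
      · intro t ht
        by_contra htm
        simp only [Set.mem_insert_iff, Set.mem_singleton_iff] at htm
        push_neg at htm
        exact htm.2.2 (h t ht htm.1 htm.2.1)
      · intro t ht
        simp only [Set.mem_insert_iff, Set.mem_singleton_iff] at ht
        rcases ht with rfl | rfl | rfl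
        · simp
        · rfl
        · simp only [Set.mem_setOf_eq, mul_add, add_mul]
    have hne1 : r ≠ r + r := fun hrr => h2 (by rw [left_eq_add.mp hrr, add_zero])
    have h0m : (0:R) ∉ ({r, r + r} : Set R) := by
      simp only [Set.mem_insert_iff, Set.mem_singleton_iff]
      push_neg
      exact ⟨h0r, fun h' => h2 h'.symm⟩
    rw [heq, Set.ncard_insert_of_notMem h0m (Set.toFinite _), Set.ncard_pair hne1]
  obtain ⟨s, hrs, hs0, hsr, hsrr⟩ := hex
  have hSprop : ∀ t : R, (t = s ∨ t = s + r ∨ t = s + r + r) →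
      t ∉ centerSet R ∧ r * t = t * r ∧ t ≠ r := by
    intro t ht
    rcases ht with rfl | rfl | rfl
    · exact ⟨hnz _ hs0, hrs, hsr⟩
    · refine ⟨hnz _ (fun h => hsrr ?_), ?_, fun h => hs0 (add_eq_right.mp h)⟩
      · rw [← hneg]; exact add_eq_zero_iff_eq_neg.mp h
      · simp only [mul_add, add_mul, hrs]
    · refine ⟨hnz _ (fun h => ?_), ?_, fun h => ?_⟩
      · rw [add_assoc] at h
        exact hsr (by rw [add_eq_zero_iff_eq_neg.mp h, hnegrr])
      · simp only [mul_add, add_mul, hrs]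
      · rw [add_assoc] at h
        have h' : s = r - (r + r) := eq_sub_of_add_eq h
        rw [sub_eq_add_neg, hnegrr] at h'
        exact hsrr h'
  have hScomm : ∀ a b : R, (a = s ∨ a = s + r ∨ a = s + r + r) →
      (b = s ∨ b = s + r ∨ b = s + r + r) → a * b = b * a := by
    intro a b ha hb
    rcases ha with rfl | rfl | rfl <;> rcases hb with rfl | rfl | rfl <;>
      (simp only [mul_add, add_mul, hrs]; try abel)
  have hz3 : (-r) + -r + -r = 0 := by rw [← neg_add, ← neg_add, h3, neg_zero]
  -- the key step: if [x,r] = ±r then x is adjacent to some element of S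
  have hstep : ∀ x : R, (x * r - r * x = r ∨ x * r - r * x = -r) →
      ∃ t : R, (t = s ∨ t = s + r ∨ t = s + r + r) ∧ x ≠ t ∧
        x * t - t * x ≠ r ∧ x * t - t * x ≠ -r := by
    intro x hd
    have hd0 : x * r - r * x ≠ 0 := by
      rcases hd with h | h <;> rw [h]
      · exact hr0
      · exact fun h' => hr0 (neg_eq_zero.mp h')
    have hxne : ∀ t : R, r * t = t * r → x ≠ t := by
      rintro t htc rfl
      exact hd0 (by rw [htc, sub_self])
    have hc1 : x * (s + r) - (s + r) * x = (x * s - s * x) + (x * r - r * x) := by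
      simp only [mul_add, add_mul]; abel
    have hc2 : x * (s + r + r) - (s + r + r) * x =
        (x * s - s * x) + (x * r - r * x) + (x * r - r * x) := by
      simp only [mul_add, add_mul]; abel
    by_cases h1 : x * s - s * x = x * r - r * x
    · refine ⟨s + r + r, Or.inr (Or.inr rfl),
        hxne _ (hSprop _ (Or.inr (Or.inr rfl))).2.1, ?_, ?_⟩
      · rw [hc2, h1]
        rcases hd with h | h <;> rw [h]
        · rw [h3]; exact h0r
        · rw [hz3]; exact h0r
      · rw [hc2, h1]
        rcases hd with h | h <;> rw [h]
        · rw [h3]; exact h0nr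
        · rw [hz3]; exact h0nr
    by_cases hm : x * s - s * x = -(x * r - r * x)
    · refine ⟨s + r, Or.inr (Or.inl rfl),
        hxne _ (hSprop _ (Or.inr (Or.inl rfl))).2.1, ?_, ?_⟩
      · rw [hc1, hm, neg_add_cancel]; exact h0r
      · rw [hc1, hm, neg_add_cancel]; exact h0nr
    · refine ⟨s, Or.inl rfl, hxne _ hrs, fun h => ?_, fun h => ?_⟩
      · rcases hd with hd' | hd'
        · exact h1 (h.trans hd'.symm)
        · exact hm (by rw [h, hd', neg_neg])
      · rcases hd with hd' | hd'
        · exact hm (by rw [h, hd'])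
        · exact h1 (h.trans hd'.symm)
  -- classification of an arbitrary noncentral element
  have hclass : ∀ v : R, v = r ∨ (v ≠ r ∧ v * r - r * v ≠ r ∧ v * r - r * v ≠ -r) ∨
      (∃ t : R, (t = s ∨ t = s + r ∨ t = s + r + r) ∧ v ≠ t ∧
        v * t - t * v ≠ r ∧ v * t - t * v ≠ -r) := by
    intro v
    by_cases hd : v * r - r * v = r ∨ v * r - r * v = -r
    · exact Or.inr (Or.inr (hstep v hd))
    · push_neg at hd
      by_cases hvr : v = r
      · exact Or.inl hvr
      · exact Or.inr (Or.inl ⟨hvr, hd.1, hd.2⟩)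
  -- adjacency constructor for the delta graph
  have hAdj : ∀ (u v : {a : R // a ∉ centerSet R}), u.val ≠ v.val →
      u.val * v.val - v.val * u.val ≠ r → u.val * v.val - v.val * u.val ≠ -r →
      (deltaGraph r).Adj u v := fun u v h1 h2' h3' =>
        (⟨h1, h2', h3'⟩ : u.val ≠ v.val ∧ u.val * v.val - v.val * u.val ≠ r ∧
          u.val * v.val - v.val * u.val ≠ -r)
  -- the special vertices
  let vr : {a : R // a ∉ centerSet R} := ⟨r, hr⟩
  have hAdjSr : ∀ (t : R) (ht : t = s ∨ t = s + r ∨ t = s + r + r),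
      (deltaGraph r).Adj ⟨t, (hSprop t ht).1⟩ vr := by
    intro t ht
    have hc : t * r - r * t = 0 := by rw [(hSprop t ht).2.1, sub_self]
    refine hAdj _ _ (hSprop t ht).2.2 ?_ ?_
    · rw [hc]; exact h0r
    · rw [hc]; exact h0nr
  -- vertex-level classification
  have hvert : ∀ v : {a : R // a ∉ centerSet R}, v = vr ∨ (deltaGraph r).Adj v vr ∨
      (∃ (t : R) (ht : t = s ∨ t = s + r ∨ t = s + r + r),
        (deltaGraph r).Adj v ⟨t, (hSprop t ht).1⟩) := by
    intro v
    rcases hclass v.val with h | h | ⟨t, ht, h⟩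
    · exact Or.inl (Subtype.ext h)
    · exact Or.inr (Or.inl (hAdj v vr h.1 h.2.1 h.2.2))
    · exact Or.inr (Or.inr ⟨t, ht, hAdj v _ h.1 h.2.1 h.2.2⟩)
  intro x y hxy
  rcases hvert x with hx | hx | ⟨t1, ht1, hx⟩ <;> rcases hvert y with hy | hy | ⟨t2, ht2, hy⟩
  · exact absurd (hx.trans hy.symm) hxy
  · subst hx
    exact ⟨SimpleGraph.Walk.cons hy.symm SimpleGraph.Walk.nil, by simp⟩
  · subst hx
    exact ⟨SimpleGraph.Walk.cons (hAdjSr t2 ht2).symm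
      (SimpleGraph.Walk.cons hy.symm SimpleGraph.Walk.nil), by simp⟩
  · subst hy
    exact ⟨SimpleGraph.Walk.cons hx SimpleGraph.Walk.nil, by simp⟩
  · exact ⟨SimpleGraph.Walk.cons hx (SimpleGraph.Walk.cons hy.symm SimpleGraph.Walk.nil),
      by simp⟩
  · exact ⟨SimpleGraph.Walk.cons hx (SimpleGraph.Walk.cons (hAdjSr t2 ht2).symm
      (SimpleGraph.Walk.cons hy.symm SimpleGraph.Walk.nil)), by simp⟩
  · subst hy
    exact ⟨SimpleGraph.Walk.cons hx (SimpleGraph.Walk.cons (hAdjSr t1 ht1)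
      SimpleGraph.Walk.nil), by simp⟩
  · exact ⟨SimpleGraph.Walk.cons hx (SimpleGraph.Walk.cons (hAdjSr t1 ht1)
      (SimpleGraph.Walk.cons hy.symm SimpleGraph.Walk.nil)), by simp⟩
  · by_cases hteq : t1 = t2
    · subst hteq
      exact ⟨SimpleGraph.Walk.cons hx (SimpleGraph.Walk.cons hy.symm
        SimpleGraph.Walk.nil), by simp⟩
    · have hcomm : t1 * t2 - t2 * t1 = 0 := by rw [hScomm t1 t2 ht1 ht2, sub_self]
      have h12 : (deltaGraph r).Adj ⟨t1, (hSprop t1 ht1).1⟩ ⟨t2, (hSprop t2 ht2).1⟩ := by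
        refine hAdj _ _ hteq ?_ ?_
        · rw [hcomm]; exact h0r
        · rw [hcomm]; exact h0nr
      exact ⟨SimpleGraph.Walk.cons hx (SimpleGraph.Walk.cons h12
        (SimpleGraph.Walk.cons hy.symm SimpleGraph.Walk.nil)), by simp⟩
end
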